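/- The two-frequency received sum power P_s(d) = (P_t/2)(c/2)²[(1/ω₁² + 1/ω₂²)(1/ℓ² + 1/r²) − (2/(ℓr))(cos(ω₁(r−ℓ)/c)/ω₁² + cos(ω₂(r−ℓ)/c)/ω₂²)] is bounded below by P̲_s(d) = (P_t/2)(c/2)²[(1/ω₁² + 1/ω₂²)(1/ℓ² + 1/r²) − (2/(ℓr))√(1/ω₁⁴ + 1/ω₂⁴ + 2cos(Δω(r−ℓ)/c)/(ω₁²ω₂²))] for every d ≥ 0, where Δω = ω₂ − ω₁. -/

import Mathlib

/-- Key envelope inequality: x cos a + y cos b ≤ √(x² + y² + 2xy cos(b−a)). -/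
lemma cos_combo_le_sqrt (x y a b : ℝ) (hx : 0 ≤ x) (hy : 0 ≤ y) :
    x * Real.cos a + y * Real.cos b ≤
      Real.sqrt (x ^ 2 + y ^ 2 + 2 * Real.cos (b - a) * (x * y)) := by
  have hs : (x * Real.cos a + y * Real.cos b) ^ 2 ≤
      x ^ 2 + y ^ 2 + 2 * Real.cos (b - a) * (x * y) := by
    have hca := Real.sin_sq_add_cos_sq a
    have hcb := Real.sin_sq_add_cos_sq b
    have hcos : Real.cos (b - a) = Real.cos b * Real.cos a + Real.sin b * Real.sin a :=
      Real.cos_sub b a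
    have heq : x ^ 2 + y ^ 2 + 2 * Real.cos (b - a) * (x * y) -
        (x * Real.cos a + y * Real.cos b) ^ 2 =
        (x * Real.sin a + y * Real.sin b) ^ 2 := by
      rw [hcos]; linear_combination (-(x ^ 2) * hca) - y ^ 2 * hcb
    nlinarith [sq_nonneg (x * Real.sin a + y * Real.sin b), heq]
  calc x * Real.cos a + y * Real.cos b
      ≤ |x * Real.cos a + y * Real.cos b| := le_abs_self _
    _ = Real.sqrt ((x * Real.cos a + y * Real.cos b) ^ 2) := (Real.sqrt_sq_eq_abs _).symm
    _ ≤ _ := Real.sqrt_le_sqrt hs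

/-- The two-frequency received sum power is bounded below by the envelope lower bound
P̲_s for every distance d ≥ 0. -/
theorem sum_power_lower_bound (ht hr c Pt ω₁ ω₂ : ℝ) (hht : 0 < ht) (hhr : 0 < hr)
    (hc : 0 < c) (hPt : 0 < Pt) (hω₁ : 0 < ω₁) (hω₂ : 0 < ω₂) :
    ∀ d ℓ r : ℝ, 0 ≤ d →
      ℓ = Real.sqrt ((ht - hr) ^ 2 + d ^ 2) →
      r = Real.sqrt ((ht + hr) ^ 2 + d ^ 2) →
      Pt / 2 * (c / 2) ^ 2 *
          ((1 / ω₁ ^ 2 + 1 / ω₂ ^ 2) * (1 / ℓ ^ 2 + 1 / r ^ 2) -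
            2 / (ℓ * r) *
              Real.sqrt (1 / ω₁ ^ 4 + 1 / ω₂ ^ 4 +
                2 * Real.cos ((ω₂ - ω₁) * (r - ℓ) / c) / (ω₁ ^ 2 * ω₂ ^ 2)))
        ≤ Pt / 2 * (c / 2) ^ 2 *
          ((1 / ω₁ ^ 2 + 1 / ω₂ ^ 2) * (1 / ℓ ^ 2 + 1 / r ^ 2) -
            2 / (ℓ * r) *
              (Real.cos (ω₁ * (r - ℓ) / c) / ω₁ ^ 2 +
                Real.cos (ω₂ * (r - ℓ) / c) / ω₂ ^ 2)) := by
  intro d ℓ r hd hℓ hr'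
  have hfac : 0 < Pt / 2 * (c / 2) ^ 2 := by positivity
  have hℓ0 : 0 ≤ ℓ := hℓ ▸ Real.sqrt_nonneg _
  have hlr : 0 ≤ 2 / (ℓ * r) := by
    have : 0 ≤ r := hr' ▸ Real.sqrt_nonneg _
    positivity
  have key : Real.cos (ω₁ * (r - ℓ) / c) / ω₁ ^ 2 + Real.cos (ω₂ * (r - ℓ) / c) / ω₂ ^ 2 ≤
      Real.sqrt (1 / ω₁ ^ 4 + 1 / ω₂ ^ 4 +
        2 * Real.cos ((ω₂ - ω₁) * (r - ℓ) / c) / (ω₁ ^ 2 * ω₂ ^ 2)) := by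
    have hx : (0:ℝ) ≤ 1 / ω₁ ^ 2 := by positivity
    have hy : (0:ℝ) ≤ 1 / ω₂ ^ 2 := by positivity
    have h := cos_combo_le_sqrt (1 / ω₁ ^ 2) (1 / ω₂ ^ 2)
      (ω₁ * (r - ℓ) / c) (ω₂ * (r - ℓ) / c) hx hy
    have harg : ω₂ * (r - ℓ) / c - ω₁ * (r - ℓ) / c = (ω₂ - ω₁) * (r - ℓ) / c := by ring
    rw [harg] at h
    have he : (1 / ω₁ ^ 2) ^ 2 + (1 / ω₂ ^ 2) ^ 2 +
        2 * Real.cos ((ω₂ - ω₁) * (r - ℓ) / c) * (1 / ω₁ ^ 2 * (1 / ω₂ ^ 2)) =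
        1 / ω₁ ^ 4 + 1 / ω₂ ^ 4 +
        2 * Real.cos ((ω₂ - ω₁) * (r - ℓ) / c) / (ω₁ ^ 2 * ω₂ ^ 2) := by
      field_simp
    rw [he] at h
    calc Real.cos (ω₁ * (r - ℓ) / c) / ω₁ ^ 2 + Real.cos (ω₂ * (r - ℓ) / c) / ω₂ ^ 2
        = 1 / ω₁ ^ 2 * Real.cos (ω₁ * (r - ℓ) / c) +
          1 / ω₂ ^ 2 * Real.cos (ω₂ * (r - ℓ) / c) := by ring
      _ ≤ _ := h
  have hmul := mul_le_mul_of_nonneg_left key hlr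
  nlinarith [hmul, hfac]
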